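/- Let 1/2 < s < 1, N ≥ 1, and let m : ℝ → ℝ be any function with m(ξ) = 1 for |ξ| ≤ N and m(ξ) = (N/|ξ|)^{1-s} for |ξ| ≥ 2N. Then for any k with k ≥ 2N² (in particular k ≫ N), the numbers ξ₁ = ξ₂ = -k, ξ₃ = -8k, ξ₄ = (5 + 2√55/5)k, ξ₅ = (5 − 2√55/5)k, ξ₆ = 0 satisfy ξ₁ + ⋯ + ξ₆ = 0, ξ₁³ + ⋯ + ξ₆³ = 0, and m(ξ₁)²ξ₁³ + m(ξ₂)²ξ₂³ + ⋯ + m(ξ₆)²ξ₆³ ≠ 0. -/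

import Mathlib

lemma sqrt55_lb : 7.41 < Real.sqrt 55 := by
  have h := Real.sq_sqrt (by norm_num : (55:ℝ) ≥ 0)
  nlinarith [Real.sqrt_nonneg 55]

lemma sqrt55_ub : Real.sqrt 55 < 7.42 := by
  have h := Real.sq_sqrt (by norm_num : (55:ℝ) ≥ 0)
  nlinarith [Real.sqrt_nonneg 55]

lemma key_numeric : (2:ℝ) * Real.log 8 < (5 - 2*Real.sqrt 55/5)^2 * Real.log (8/(5 - 2*Real.sqrt 55/5)) := by
  set b : ℝ := 5 - 2*Real.sqrt 55/5 with hbdef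
  have hb1 : 2.03 < b := by rw [hbdef]; nlinarith [sqrt55_ub]
  have hb2 : b < 2.04 := by rw [hbdef]; nlinarith [sqrt55_lb]
  have hbpos : 0 < b := lt_trans (by norm_num) hb1
  have hlog8 : Real.log 8 = 3 * Real.log 2 := by
    rw [show (8:ℝ) = 2^3 by norm_num, Real.log_pow]; push_cast; ring
  have h8b : Real.log (8/b) = 2 * Real.log 2 - Real.log (b/2) := by
    rw [Real.log_div (by norm_num) hbpos.ne', Real.log_div hbpos.ne' (by norm_num),
      show (8:ℝ) = 2^3 by norm_num, Real.log_pow]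
    push_cast; ring
  have hlb2 : Real.log (b/2) ≤ b/2 - 1 := Real.log_le_sub_one_of_pos (by linarith)
  have hl2 : (0.6931471803:ℝ) < Real.log 2 := Real.log_two_gt_d9
  have hl2' : Real.log 2 < 0.6931471808 := Real.log_two_lt_d9
  rw [hlog8, h8b]
  nlinarith [sq_nonneg (b - 2.03), sq_nonneg b]

lemma main_ineq (σ : ℝ) (h2 : 2 < σ) (h3 : σ < 3) :
    2 + (8:ℝ)^σ < (5 + 2*Real.sqrt 55/5)^σ + (5 - 2*Real.sqrt 55/5)^σ := by
  have hr := Real.sq_sqrt (by norm_num : (55:ℝ) ≥ 0)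
  set a : ℝ := 5 + 2*Real.sqrt 55/5 with hadef
  set b : ℝ := 5 - 2*Real.sqrt 55/5 with hbdef
  clear_value a b
  have ha1 : 7.9 < a := by rw [hadef]; nlinarith [sqrt55_lb]
  have ha2 : a < 8 := by rw [hadef]; nlinarith [sqrt55_ub]
  have hb1 : 2.03 < b := by rw [hbdef]; nlinarith [sqrt55_ub]
  have hb2 : b < 2.04 := by rw [hbdef]; nlinarith [sqrt55_lb]
  have hapos : 0 < a := lt_trans (by norm_num) ha1
  have hbpos : 0 < b := lt_trans (by norm_num) hb1
  have hcube : a^3 + b^3 = 514 := by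
    rw [hadef, hbdef]; nlinarith [hr]
  set G : ℝ → ℝ := fun x => a^2*(a/8)^x + b^2*(b/8)^x - 2*(1/8)^x - 64 with hGdef
  clear_value G
  have hG1 : G 1 = 0 := by
    simp only [hGdef, Real.rpow_one]
    nlinarith [hcube]
  have hG' : ∀ x : ℝ, HasDerivAt G
      (a^2*((a/8)^x * Real.log (a/8)) + b^2*((b/8)^x * Real.log (b/8))
        - 2*((1/8)^x * Real.log (1/8))) x := by
    intro x
    have d1 := (Real.hasStrictDerivAt_const_rpow (show (0:ℝ) < a/8 by positivity) x).hasDerivAt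
    have d2 := (Real.hasStrictDerivAt_const_rpow (show (0:ℝ) < b/8 by positivity) x).hasDerivAt
    have d3 := (Real.hasStrictDerivAt_const_rpow (show (0:ℝ) < (1:ℝ)/8 by norm_num) x).hasDerivAt
    have := (((d1.const_mul (a^2)).add (d2.const_mul (b^2))).sub (d3.const_mul 2)).sub
      (hasDerivAt_const x (64:ℝ))
    rw [hGdef]
    exact this.congr_deriv (by ring)
  have hanti : StrictAntiOn G (Set.Icc 0 1) := by
    apply strictAntiOn_of_deriv_neg (convex_Icc 0 1)
    · exact fun x _ => (hG' x).continuousAt.continuousWithinAt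
    · intro x hx
      rw [interior_Icc] at hx
      rw [(hG' x).deriv]
      have hx18 : (0:ℝ) < (1/8:ℝ)^x := Real.rpow_pos_of_pos (by norm_num) x
      have hlogab : Real.log (a/8) < 0 := Real.log_neg (by positivity) (by
        rw [div_lt_one (by norm_num : (0:ℝ) < 8)]; exact ha2)
      have t1 : a^2*((a/8)^x * Real.log (a/8)) < 0 := by
        apply mul_neg_of_pos_of_neg (by positivity)
        exact mul_neg_of_pos_of_neg (Real.rpow_pos_of_pos (by positivity) x) hlogab
      have hbx : 1 ≤ b^x := Real.one_le_rpow (by linarith) hx.1.le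
      have hsplit : (b/8:ℝ)^x = b^x * (1/8:ℝ)^x := by
        rw [show b/8 = b*(1/8) by ring, Real.mul_rpow hbpos.le (by norm_num)]
      have hlogb8 : Real.log (b/8) = -Real.log (8/b) := by
        rw [Real.log_div hbpos.ne' (by norm_num), Real.log_div (by norm_num) hbpos.ne']; ring
      have hlog8b_pos : 0 < Real.log (8/b) := Real.log_pos (by
        rw [lt_div_iff₀ hbpos]; linarith)
      have hkey := key_numeric
      rw [← hbdef] at hkey
      have hlog18 : Real.log ((1:ℝ)/8) = -Real.log 8 := by rw [one_div, Real.log_inv]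
      rw [hsplit, hlogb8, hlog18]
      have hbxpos : (0:ℝ) < b^x := Real.rpow_pos_of_pos hbpos x
      nlinarith [mul_lt_mul_of_pos_left hkey hx18,
        mul_le_mul_of_nonneg_right hbx (le_of_lt (mul_pos (mul_pos (by positivity : (0:ℝ) < b^2) hx18) hlog8b_pos))]
  set lam := σ - 2 with hlam
  have hmeml : lam ∈ Set.Icc (0:ℝ) 1 := ⟨by simp [hlam]; linarith, by simp [hlam]; linarith⟩
  have hGl : 0 < G lam := by
    have := hanti hmeml (by norm_num : (1:ℝ) ∈ Set.Icc (0:ℝ) 1) (by simp [hlam]; linarith)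
    rwa [hG1] at this
  have h8l : (0:ℝ) < (8:ℝ)^lam := Real.rpow_pos_of_pos (by norm_num) lam
  have hGeq : G lam * (8:ℝ)^lam = a^2*a^lam + b^2*b^lam - 2 - 64*(8:ℝ)^lam := by
    simp only [hGdef]
    rw [Real.div_rpow hapos.le (by norm_num), Real.div_rpow hbpos.le (by norm_num),
        Real.div_rpow (by norm_num) (by norm_num : (0:ℝ) ≤ 8), Real.one_rpow]
    field_simp
  have hnum : 0 < a^2*a^lam + b^2*b^lam - 2 - 64*(8:ℝ)^lam := by
    rw [← hGeq]; positivity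
  have hsig : σ = 2 + lam := by rw [hlam]; ring
  have hAa : a^σ = a^2 * a^lam := by
    rw [hsig, Real.rpow_add hapos, Real.rpow_two]
  have hBb : b^σ = b^2 * b^lam := by
    rw [hsig, Real.rpow_add hbpos, Real.rpow_two]
  have h88 : (8:ℝ)^σ = 64 * (8:ℝ)^lam := by
    rw [hsig, Real.rpow_add (by norm_num : (0:ℝ) < 8), Real.rpow_two]; norm_num
  rw [hAa, hBb, h88]
  linarith

lemma term_eval (s N x : ℝ) (hN : 0 < N) (hx : 0 < x) :
    ((N/x)^(1-s))^2 * x^3 = N^(2-2*s) * x^(2*s+1) := by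
  have h1 : ((N/x)^(1-s))^2 = (N/x)^(2-2*s) := by
    rw [← Real.rpow_natCast ((N/x)^(1-s)) 2, ← Real.rpow_mul (by positivity : (0:ℝ) ≤ N/x)]
    norm_num
    ring_nf
  have h2 : x^(3:ℕ) = x^(2-2*s) * x^(2*s+1) := by
    rw [← Real.rpow_natCast x 3, ← Real.rpow_add hx, show 2-2*s+(2*s+1) = (3:ℝ) by ring]
    norm_num
  rw [h1, h2, Real.div_rpow hN.le hx.le]
  have hxe : x^(2-2*s) ≠ 0 := (Real.rpow_pos_of_pos hx _).ne'
  field_simp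

set_option maxHeartbeats 1000000 in
theorem M6_not_well_defined (s N : ℝ) (hs : 1/2 < s) (hs1 : s < 1) (hN : 1 ≤ N)
    (m : ℝ → ℝ)
    (hm_low : ∀ ξ : ℝ, |ξ| ≤ N → m ξ = 1)
    (hm_high : ∀ ξ : ℝ, |ξ| ≥ 2*N → m ξ = (N/|ξ|)^(1-s))
    (k : ℝ) (hk : k ≥ 2*N^2)
    (ξ₁ ξ₂ ξ₃ ξ₄ ξ₅ ξ₆ : ℝ)
    (h1 : ξ₁ = -k) (h2 : ξ₂ = -k) (h3 : ξ₃ = -8*k)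
    (h4 : ξ₄ = (5 + 2*Real.sqrt 55/5)*k) (h5 : ξ₅ = (5 - 2*Real.sqrt 55/5)*k)
    (h6 : ξ₆ = 0) :
    ξ₁ + ξ₂ + ξ₃ + ξ₄ + ξ₅ + ξ₆ = 0 ∧
    ξ₁^3 + ξ₂^3 + ξ₃^3 + ξ₄^3 + ξ₅^3 + ξ₆^3 = 0 ∧
    (m ξ₁)^2*ξ₁^3 + (m ξ₂)^2*ξ₂^3 + (m ξ₃)^2*ξ₃^3 +
      (m ξ₄)^2*ξ₄^3 + (m ξ₅)^2*ξ₅^3 + (m ξ₆)^2*ξ₆^3 ≠ 0 := by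
  have hN0 : (0:ℝ) < N := lt_of_lt_of_le one_pos hN
  have hk0 : (0:ℝ) < k := by nlinarith
  have hkN : 2*N ≤ k := by nlinarith
  have hr := Real.sq_sqrt (by norm_num : (55:ℝ) ≥ 0)
  subst h1 h2 h3 h4 h5 h6
  refine ⟨by ring, by linear_combination (24/5*k^3) * hr, ?_⟩
  set a : ℝ := 5 + 2*Real.sqrt 55/5 with hadef
  set b : ℝ := 5 - 2*Real.sqrt 55/5 with hbdef
  have hmain := main_ineq (2*s+1) (by linarith) (by linarith)
  rw [← hadef, ← hbdef] at hmain
  clear_value a b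
  have ha1 : 7.9 < a := by rw [hadef]; nlinarith [sqrt55_lb]
  have ha2 : a < 8 := by rw [hadef]; nlinarith [sqrt55_ub]
  have hb1 : 2.03 < b := by rw [hbdef]; nlinarith [sqrt55_ub]
  have hb2 : b < 2.04 := by rw [hbdef]; nlinarith [sqrt55_lb]
  have hapos : 0 < a := lt_trans (by norm_num) ha1
  have hbpos : 0 < b := lt_trans (by norm_num) hb1
  have habs1 : |(-k)| = k := by rw [abs_of_neg (by linarith : -k < 0)]; ring
  have habs3 : |(-8*k)| = 8*k := by rw [abs_of_neg (by nlinarith : -8*k < 0)]; ring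
  have habs4 : |a*k| = a*k := abs_of_pos (by positivity)
  have habs5 : |b*k| = b*k := abs_of_pos (by positivity)
  have hm1 : m (-k) = (N/k)^(1-s) := by
    rw [hm_high _ (by rw [habs1]; linarith), habs1]
  have hm3 : m (-8*k) = (N/(8*k))^(1-s) := by
    rw [hm_high _ (by rw [habs3]; nlinarith), habs3]
  have hm4 : m (a*k) = (N/(a*k))^(1-s) := by
    rw [hm_high _ (by rw [habs4]; nlinarith), habs4]
  have hm5 : m (b*k) = (N/(b*k))^(1-s) := by
    rw [hm_high _ (by rw [habs5]; nlinarith), habs5]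
  have hm6 : m 0 = 1 := hm_low 0 (by rw [abs_zero]; linarith)
  have T1 := term_eval s N k hN0 hk0
  have T3 := term_eval s N (8*k) hN0 (by linarith)
  have T4 := term_eval s N (a*k) hN0 (by positivity)
  have T5 := term_eval s N (b*k) hN0 (by positivity)
  have m8 : ((8:ℝ)*k)^(2*s+1) = (8:ℝ)^(2*s+1)*k^(2*s+1) :=
    Real.mul_rpow (by norm_num) hk0.le
  have ma : (a*k)^(2*s+1) = a^(2*s+1)*k^(2*s+1) := Real.mul_rpow hapos.le hk0.le
  have mb : (b*k)^(2*s+1) = b^(2*s+1)*k^(2*s+1) := Real.mul_rpow hbpos.le hk0.le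
  have key : ((N/k)^(1-s))^2*(-k)^3 + ((N/k)^(1-s))^2*(-k)^3
      + ((N/(8*k))^(1-s))^2*(-8*k)^3 + ((N/(a*k))^(1-s))^2*(a*k)^3
      + ((N/(b*k))^(1-s))^2*(b*k)^3 + (1:ℝ)^2*(0:ℝ)^3
      = N^(2-2*s)*k^(2*s+1)*(a^(2*s+1)+b^(2*s+1)-2-(8:ℝ)^(2*s+1)) := by
    linear_combination (-2:ℝ)*T1 - T3 + T4 + T5 - N^(2-2*s)*m8 + N^(2-2*s)*ma + N^(2-2*s)*mb
  have hNt : (0:ℝ) < N^(2-2*s) := Real.rpow_pos_of_pos hN0 _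
  have hkσ : (0:ℝ) < k^(2*s+1) := Real.rpow_pos_of_pos hk0 _
  have hD : 0 < N^(2-2*s)*k^(2*s+1)*(a^(2*s+1)+b^(2*s+1)-2-(8:ℝ)^(2*s+1)) :=
    mul_pos (mul_pos hNt hkσ) (by linarith)
  intro hzero
  rw [hm1, hm3, hm4, hm5, hm6] at hzero
  linarith [key, hzero, hD]
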